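/- Let β > 0, and let r and α be positive real numbers with r < β/(2√2 + 2) and α < β/(2√2 + 2). Define the ensemble average polynomial P̄_n(z) = (1 − z/β)^n Σ_{j=0}^{n−1} (z/β)^j (n+j−1)!/(j!(n−1)!). Then for every ε > 0 there exists N such that for all n ≥ N: |1 − P̄_n(z)| < ε for every z with |z| ≤ r, and |P̄_n(z)| < ε for every z with |z − β| ≤ α. -/

import Mathlib

/-- The ensemble average polynomial
`P̄_n(z) = (1 - z/β)^n ∑_{j=0}^{n-1} (z/β)^j (n+j-1)!/(j!(n-1)!)`. -/
noncomputable def ensembleAvg (n : ℕ) (β : ℂ) (z : ℂ) : ℂ :=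
  (1 - z / β) ^ n * ∑ j ∈ Finset.range n,
    (z / β) ^ j *
      ((Nat.factorial (n + j - 1) : ℂ) /
        ((Nat.factorial j : ℂ) * (Nat.factorial (n - 1) : ℂ)))

private lemma choose_le_two_pow' (n k : ℕ) : n.choose k ≤ 2 ^ n := by
  rcases le_or_gt k n with h | h
  · calc n.choose k ≤ ∑ i ∈ Finset.range (n + 1), n.choose i :=
        Finset.single_le_sum (f := fun i => n.choose i) (fun i _ => Nat.zero_le _)
          (Finset.mem_range.2 (Nat.lt_succ_of_le h))
      _ = 2 ^ n := Nat.sum_range_choose n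
  · rw [Nat.choose_eq_zero_of_lt h]; positivity

private lemma ensembleAvg_eq (n : ℕ) (hn : 1 ≤ n) (β z : ℂ) :
    ensembleAvg n β z = (1 - z / β) ^ n *
      ∑ j ∈ Finset.range n, ((j + (n - 1)).choose (n - 1) : ℂ) * (z / β) ^ j := by
  unfold ensembleAvg
  congr 1
  refine Finset.sum_congr rfl fun j _ => ?_
  rw [Nat.cast_choose ℂ (Nat.le_add_left (n - 1) j)]
  have h1 : n + j - 1 = j + (n - 1) := by omega
  have h2 : j + (n - 1) - (n - 1) = j := by omega
  rw [h1, h2]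
  ring

private lemma aux_norm_sum_le (n : ℕ) (t : ℝ) (ht0 : 0 ≤ t) (w : ℂ)
    (hw : ‖w‖ ≤ 1 + t) :
    ‖∑ j ∈ Finset.range n, ((j + (n - 1)).choose (n - 1) : ℂ) * w ^ j‖ ≤
      (n : ℝ) * (4 * (1 + t)) ^ n := by
  calc ‖∑ j ∈ Finset.range n, ((j + (n - 1)).choose (n - 1) : ℂ) * w ^ j‖
      ≤ ∑ j ∈ Finset.range n, ‖((j + (n - 1)).choose (n - 1) : ℂ) * w ^ j‖ :=
        norm_sum_le _ _
    _ ≤ ∑ j ∈ Finset.range n, (4 * (1 + t)) ^ n := by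
        refine Finset.sum_le_sum fun j hj => ?_
        have hj' : j < n := Finset.mem_range.1 hj
        rw [norm_mul, norm_pow]
        have hc : (((j + (n - 1)).choose (n - 1) : ℕ) : ℝ) ≤ (4 : ℝ) ^ n := by
          have h1 : (j + (n - 1)).choose (n - 1) ≤ 2 ^ (j + (n - 1)) :=
            choose_le_two_pow' _ _
          have h2 : (2 : ℕ) ^ (j + (n - 1)) ≤ 2 ^ (2 * n) :=
            Nat.pow_le_pow_right (by norm_num) (by omega)
          have : (j + (n - 1)).choose (n - 1) ≤ 4 ^ n := by
            calc (j + (n - 1)).choose (n - 1) ≤ 2 ^ (2 * n) := le_trans h1 h2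
              _ = 4 ^ n := by rw [pow_mul]; norm_num
          exact_mod_cast this
        have hcn : ‖(((j + (n - 1)).choose (n - 1) : ℕ) : ℂ)‖ ≤ (4 : ℝ) ^ n := by
          rw [Complex.norm_natCast]; exact hc
        have hwn : ‖w‖ ^ j ≤ (1 + t) ^ n := by
          calc ‖w‖ ^ j ≤ (1 + t) ^ j :=
              pow_le_pow_left₀ (norm_nonneg w) hw j
            _ ≤ (1 + t) ^ n := pow_le_pow_right₀ (by linarith) (le_of_lt hj')
        calc ‖(((j + (n - 1)).choose (n - 1) : ℕ) : ℂ)‖ * ‖w‖ ^ j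
            ≤ (4 : ℝ) ^ n * (1 + t) ^ n := by
              apply mul_le_mul hcn hwn (by positivity) (by positivity)
          _ = (4 * (1 + t)) ^ n := by rw [mul_pow]
    _ = (n : ℝ) * (4 * (1 + t)) ^ n := by
        rw [Finset.sum_const, Finset.card_range, nsmul_eq_mul]

private lemma aux1 (n : ℕ) (hn : 1 ≤ n) (t : ℝ) (ht0 : 0 ≤ t) (ht : 2 * t < 1)
    (w : ℂ) (hw : ‖w‖ ≤ t) :
    ‖1 - (1 - w) ^ n *
        ∑ j ∈ Finset.range n, ((j + (n - 1)).choose (n - 1) : ℂ) * w ^ j‖ ≤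
      (4 * t * (1 + t)) ^ n / (1 - 2 * t) := by
  have hw1 : ‖w‖ < 1 := lt_of_le_of_lt hw (by linarith)
  have hk : (n - 1) + 1 = n := by omega
  have H := hasSum_choose_mul_geometric_of_norm_lt_one (𝕜 := ℂ) (n - 1) hw1
  rw [hk] at H
  have hsum := Summable.sum_add_tsum_nat_add n H.summable
  rw [H.tsum_eq] at hsum
  set T : ℂ := ∑' (i : ℕ), (((i + n) + (n - 1)).choose (n - 1) : ℂ) * w ^ (i + n)
    with hT
  have hS : ∑ j ∈ Finset.range n, (((j + (n - 1)).choose (n - 1) : ℂ)) * w ^ j =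
      1 / (1 - w) ^ n - T := by
    rw [← hsum]; ring
  have h1w : (1 : ℂ) - w ≠ 0 := by
    intro h
    have hwe : w = 1 := by linear_combination -h
    rw [hwe] at hw1
    simp at hw1
  have key : 1 - (1 - w) ^ n *
      ∑ j ∈ Finset.range n, ((j + (n - 1)).choose (n - 1) : ℂ) * w ^ j
      = (1 - w) ^ n * T := by
    rw [hS]
    have hpow : ((1 : ℂ) - w) ^ n ≠ 0 := pow_ne_zero n h1w
    field_simp
    ring
  rw [key]
  -- bound the tail
  have h2t : ‖(2 : ℝ) * t‖ < 1 := by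
    rw [Real.norm_eq_abs, abs_of_nonneg (by positivity)]; exact ht
  have hgeo : HasSum (fun i : ℕ => ((4 : ℝ) ^ n * t ^ n) * (2 * t) ^ i)
      (((4 : ℝ) ^ n * t ^ n) * (1 - 2 * t)⁻¹) := by
    exact (hasSum_geometric_of_norm_lt_one (ξ := (2 : ℝ) * t) h2t).mul_left _
  have hTb : ‖T‖ ≤ ((4 : ℝ) ^ n * t ^ n) * (1 - 2 * t)⁻¹ := by
    refine tsum_of_norm_bounded hgeo fun i => ?_
    rw [norm_mul, norm_pow, Complex.norm_natCast]
    have hc : ((((i + n) + (n - 1)).choose (n - 1) : ℕ) : ℝ) ≤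
        (2 : ℝ) ^ ((i + n) + (n - 1)) := by
      exact_mod_cast choose_le_two_pow' _ _
    have hwp : ‖w‖ ^ (i + n) ≤ t ^ (i + n) :=
      pow_le_pow_left₀ (norm_nonneg w) hw _
    calc ((((i + n) + (n - 1)).choose (n - 1) : ℕ) : ℝ) * ‖w‖ ^ (i + n)
        ≤ (2 : ℝ) ^ ((i + n) + (n - 1)) * t ^ (i + n) := by
          apply mul_le_mul hc hwp (by positivity) (by positivity)
      _ ≤ (2 : ℝ) ^ (i + n + n) * t ^ (i + n) := by
          apply mul_le_mul_of_nonneg_right _ (by positivity)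
          apply pow_le_pow_right₀ (by norm_num) (by omega)
      _ = ((4 : ℝ) ^ n * t ^ n) * (2 * t) ^ i := by
          rw [mul_pow, pow_add, pow_add, pow_add]
          have : (4 : ℝ) ^ n = 2 ^ n * 2 ^ n := by
            rw [show (4 : ℝ) = 2 * 2 by norm_num, mul_pow]
          rw [this]; ring
  have h1wn : ‖((1 : ℂ) - w)‖ ≤ 1 + t := by
    calc ‖(1 : ℂ) - w‖ ≤ ‖(1 : ℂ)‖ + ‖w‖ := norm_sub_le _ _
      _ ≤ 1 + t := by rw [norm_one]; linarith
  calc ‖(1 - w) ^ n * T‖ = ‖(1 : ℂ) - w‖ ^ n * ‖T‖ := by rw [norm_mul, norm_pow]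
    _ ≤ (1 + t) ^ n * (((4 : ℝ) ^ n * t ^ n) * (1 - 2 * t)⁻¹) := by
        apply mul_le_mul (pow_le_pow_left₀ (norm_nonneg _) h1wn n) hTb
          (norm_nonneg _) (by positivity)
    _ = (4 * t * (1 + t)) ^ n / (1 - 2 * t) := by
        rw [div_eq_mul_inv, mul_pow, mul_pow]; ring

private lemma aux2 (n : ℕ) (t : ℝ) (ht0 : 0 ≤ t) (w : ℂ) (hw : ‖1 - w‖ ≤ t) :
    ‖(1 - w) ^ n *
        ∑ j ∈ Finset.range n, ((j + (n - 1)).choose (n - 1) : ℂ) * w ^ j‖ ≤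
      (n : ℝ) * (4 * t * (1 + t)) ^ n := by
  have hwn : ‖w‖ ≤ 1 + t := by
    calc ‖w‖ = ‖(1 : ℂ) - (1 - w)‖ := by ring_nf
      _ ≤ ‖(1 : ℂ)‖ + ‖1 - w‖ := norm_sub_le _ _
      _ ≤ 1 + t := by rw [norm_one]; linarith
  rw [norm_mul, norm_pow]
  calc ‖(1 : ℂ) - w‖ ^ n * ‖∑ j ∈ Finset.range n,
        ((j + (n - 1)).choose (n - 1) : ℂ) * w ^ j‖
      ≤ t ^ n * ((n : ℝ) * (4 * (1 + t)) ^ n) := by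
        apply mul_le_mul (pow_le_pow_left₀ (norm_nonneg _) hw n)
          (aux_norm_sum_le n t ht0 w hwn) (norm_nonneg _) (by positivity)
    _ = (n : ℝ) * (4 * t * (1 + t)) ^ n := by
        rw [mul_pow, mul_pow]; ring

/-- If `r, α < β/(2√2+2)` then, for `n` large enough, `P̄_n` is uniformly close to `1` on
the closed disk `|z| ≤ r` and uniformly close to `0` on the closed disk `|z - β| ≤ α`. -/
theorem ensembleAvg_cloaking (β r α : ℝ) (hβ : 0 < β) (hr : 0 < r) (hα : 0 < α)
    (hr' : r < β / (2 * Real.sqrt 2 + 2)) (hα' : α < β / (2 * Real.sqrt 2 + 2)) :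
    ∀ ε : ℝ, 0 < ε → ∃ N : ℕ, ∀ n : ℕ, N ≤ n →
      (∀ z : ℂ, ‖z‖ ≤ r → ‖1 - ensembleAvg n β z‖ < ε) ∧
      (∀ z : ℂ, ‖z - β‖ ≤ α → ‖ensembleAvg n β z‖ < ε) := by
  intro ε hε
  set s := Real.sqrt 2 with hs
  have hs2 : s ^ 2 = 2 := Real.sq_sqrt (by norm_num)
  have hs0 : 0 ≤ s := Real.sqrt_nonneg 2
  have hs1 : 1 < s := by nlinarith
  have hden : 0 < 2 * s + 2 := by linarith
  set t : ℝ := (max r α) / β with htdef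
  have ht0 : 0 < t := by
    apply div_pos (lt_of_lt_of_le hr (le_max_left r α)) hβ
  have htlt : t * (2 * s + 2) < 1 := by
    have hmax : max r α < β / (2 * s + 2) := max_lt hr' hα'
    have h' : max r α * (2 * s + 2) < β := (lt_div_iff₀ hden).1 hmax
    rw [htdef, div_mul_eq_mul_div, div_lt_one hβ]
    exact h'
  have ht2 : 2 * t < 1 := by nlinarith
  set q : ℝ := 4 * t * (1 + t) with hq
  have hq0 : 0 < q := by positivity
  have hq1 : q < 1 := by
    have hA : 0 < 1 - (2 * s + 2) * t := by nlinarith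
    have hB : 0 < 1 + (2 * s - 2) * t := by nlinarith
    nlinarith [mul_pos hA hB]
  -- the two vanishing sequences
  have hqn : ‖q‖ < 1 := by rw [Real.norm_eq_abs, abs_of_pos hq0]; exact hq1
  have h1 : Filter.Tendsto (fun n : ℕ => (n : ℝ) * q ^ n) Filter.atTop (nhds 0) := by
    have := (summable_pow_mul_geometric_of_norm_lt_one 1 hqn).tendsto_atTop_zero
    simpa using this
  have h2 : Filter.Tendsto (fun n : ℕ => q ^ n / (1 - 2 * t)) Filter.atTop
      (nhds 0) := by
    have := (tendsto_pow_atTop_nhds_zero_of_norm_lt_one hqn).div_const (1 - 2 * t)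
    simpa using this
  have e1 := h1.eventually_lt_const hε
  have e2 := h2.eventually_lt_const hε
  rw [Filter.eventually_atTop] at e1 e2
  obtain ⟨N1, hN1⟩ := e1
  obtain ⟨N2, hN2⟩ := e2
  refine ⟨max 1 (max N1 N2), fun n hn => ?_⟩
  have hn1 : 1 ≤ n := le_trans (le_max_left _ _) hn
  have hnN1 : N1 ≤ n := le_trans (le_trans (le_max_left _ _) (le_max_right _ _)) hn
  have hnN2 : N2 ≤ n := le_trans (le_trans (le_max_right _ _) (le_max_right _ _)) hn
  have hβc : (β : ℂ) ≠ 0 := by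
    exact_mod_cast Complex.ofReal_ne_zero.2 (ne_of_gt hβ)
  constructor
  · intro z hz
    set w : ℂ := z / (β : ℂ) with hw
    have hwle : ‖w‖ ≤ t := by
      rw [hw, norm_div, Complex.norm_real, Real.norm_eq_abs, abs_of_pos hβ,
        htdef]
      gcongr
      exact le_trans hz (le_max_left r α)
    have := aux1 n hn1 t (le_of_lt ht0) ht2 w hwle
    rw [ensembleAvg_eq n hn1 β z]
    calc ‖1 - (1 - z / ↑β) ^ n * ∑ j ∈ Finset.range n,
          ((j + (n - 1)).choose (n - 1) : ℂ) * (z / ↑β) ^ j‖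
        ≤ q ^ n / (1 - 2 * t) := this
      _ < ε := hN2 n hnN2
  · intro z hz
    set w : ℂ := z / (β : ℂ) with hw
    have hwle : ‖1 - w‖ ≤ t := by
      have heq : (1 : ℂ) - w = ((β : ℂ) - z) / (β : ℂ) := by
        rw [hw]; field_simp
      have hzb : ‖(β : ℂ) - z‖ ≤ α := by
        rw [show (β : ℂ) - z = -(z - β) by ring, norm_neg]
        exact hz
      rw [heq, norm_div, Complex.norm_real, Real.norm_eq_abs, abs_of_pos hβ,
        htdef]
      gcongr
      exact le_trans hzb (le_max_right r α)
    have := aux2 n t (le_of_lt ht0) w hwle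
    rw [ensembleAvg_eq n hn1 β z]
    calc ‖(1 - z / ↑β) ^ n * ∑ j ∈ Finset.range n,
          ((j + (n - 1)).choose (n - 1) : ℂ) * (z / ↑β) ^ j‖
        ≤ (n : ℝ) * q ^ n := this
      _ < ε := hN1 n hnN1
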